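/- Let V be a torsion-free nilpotent group, U a normal subgroup of finite index, and α an automorphism of V that centralizes U. Then α is the identity. -/

import Mathlib

private lemma conj_pow_aux {V : Type*} [Group V] (v e : V) (m : ℕ) :
    v⁻¹ * e ^ m * v = (v⁻¹ * e * v) ^ m := by
  induction m with
  | zero => simp
  | succ m ih => rw [pow_succ, pow_succ, ← ih]; group

open scoped commutatorElement in
private lemma stmt_14_aux {V : Type*} [Group V] [Group.IsNilpotent V]
    (hTF : ∀ g : V, g ≠ 1 → ¬IsOfFinOrder g)
    (U : Subgroup V) [U.Normal] [U.FiniteIndex]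
    (α : MulAut V) (hα : ∀ u ∈ U, α u = u) (v : V) : α v = v := by
  classical
  -- torsion-free helper
  have htf : ∀ (g : V) (m : ℕ), m ≠ 0 → g ^ m = 1 → g = 1 := by
    intro g m hm h1
    by_contra hg
    exact hTF g hg (isOfFinOrder_iff_pow_eq_one.mpr ⟨m, Nat.pos_of_ne_zero hm, h1⟩)
  set n := U.index with hn
  have hn0 : n ≠ 0 := Subgroup.FiniteIndex.index_ne_zero
  set C : Subgroup V := Subgroup.centralizer (U : Set V) with hC
  -- C is abelian (via the transfer homomorphism into its center)
  have hUC : U.subgroupOf C ≤ Subgroup.center ↥C := by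
    intro x hx
    rw [Subgroup.mem_center_iff]
    intro g
    have hxU : (x : V) ∈ U := hx
    have := (Subgroup.mem_centralizer_iff.mp g.2) (x : V) hxU
    exact Subtype.ext this.symm
  haveI : (Subgroup.center ↥C).FiniteIndex := Subgroup.finiteIndex_of_le hUC
  have hcommSub : ∀ x y : ↥C, x * y = y * x := by
    have hinj : Function.Injective (MonoidHom.transferCenterPow ↥C) := by
      rw [injective_iff_map_eq_one]
      intro a ha
      have h2 : (a : ↥C) ^ (Subgroup.center ↥C).index = 1 := by
        have := congrArg (Subtype.val) ha
        rwa [MonoidHom.transferCenterPow_apply] at this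
      have h3 : (a : V) ^ (Subgroup.center ↥C).index = 1 := by
        have := congrArg (Subtype.val) h2
        simpa using this
      exact Subtype.ext (htf _ _ Subgroup.FiniteIndex.index_ne_zero h3)
    intro x y
    apply hinj
    rw [map_mul, map_mul]
    exact Subtype.ext (Subgroup.mem_center_iff.mp ((MonoidHom.transferCenterPow ↥C) y).2 _)
  have hcomm : ∀ x y : V, x ∈ C → y ∈ C → x * y = y * x := by
    intro x y hx hy
    exact congrArg Subtype.val (hcommSub ⟨x, hx⟩ ⟨y, hy⟩)
  -- the defect c of v
  set c : V := v⁻¹ * α v with hcdef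
  have hvc : v * c = α v := by rw [hcdef]; group
  have hc : c ∈ C := by
    rw [hC, Subgroup.mem_centralizer_iff]
    intro u hu
    have hmem : v * u * v⁻¹ ∈ U := Subgroup.Normal.conj_mem ‹U.Normal› u hu v
    have key : α v * u * (α v)⁻¹ = v * u * v⁻¹ := by
      have h1 : α (v * u * v⁻¹) = v * u * v⁻¹ := hα _ hmem
      have h2 : α (v * u * v⁻¹) = α v * u * (α v)⁻¹ := by
        rw [map_mul, map_mul, map_inv, hα u hu]
      rw [← h2, h1]
    have key2 : α v * u = v * u * v⁻¹ * α v := by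
      rw [← key]; group
    calc u * c = u * (v⁻¹ * α v) := by rw [hcdef]
      _ = v⁻¹ * (v * u * v⁻¹ * α v) := by group
      _ = v⁻¹ * (α v * u) := by rw [key2]
      _ = c * u := by rw [hcdef]; group
  -- conjugation by v preserves C
  have hσC : ∀ x ∈ C, v⁻¹ * x * v ∈ C := by
    intro x hx
    rw [hC, Subgroup.mem_centralizer_iff]
    intro u hu
    have hmem : v * u * v⁻¹ ∈ U := Subgroup.Normal.conj_mem ‹U.Normal› u hu v
    have hx' : (v * u * v⁻¹) * x = x * (v * u * v⁻¹) :=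
      Subgroup.mem_centralizer_iff.mp hx _ hmem
    calc u * (v⁻¹ * x * v) = v⁻¹ * ((v * u * v⁻¹) * x) * v := by group
      _ = v⁻¹ * (x * (v * u * v⁻¹)) * v := by rw [hx']
      _ = (v⁻¹ * x * v) * u := by group
  -- the "unipotent" map ν
  set ν : V → V := fun x => x⁻¹ * (v⁻¹ * x * v) with hν
  have hν1 : ν 1 = 1 := by rw [hν]; simp
  have hνC : ∀ x ∈ C, ν x ∈ C := by
    intro x hx
    exact mul_mem (inv_mem hx) (hσC x hx)
  have hνiterC : ∀ (k : ℕ) (x : V), x ∈ C → ν^[k] x ∈ C := by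
    intro k
    induction k with
    | zero => intro x hx; simpa using hx
    | succ k ih =>
      intro x hx
      rw [Function.iterate_succ_apply']
      exact hνC _ (ih x hx)
  have hνmul : ∀ x y : V, x ∈ C → y ∈ C → ν (x * y) = ν x * ν y := by
    intro x y hx hy
    have h1 : ν (x * y) = y⁻¹ * ν x * y * ν y := by rw [hν]; group
    have h2 : ν x * y = y * ν x := hcomm _ _ (hνC x hx) hy
    rw [h1, mul_assoc y⁻¹, h2]
    group
  have hνitermul : ∀ (k : ℕ) (x y : V), x ∈ C → y ∈ C →
      ν^[k] (x * y) = ν^[k] x * ν^[k] y := by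
    intro k
    induction k with
    | zero => intro x y _ _; simp
    | succ k ih =>
      intro x y hx hy
      rw [Function.iterate_succ_apply', Function.iterate_succ_apply',
        Function.iterate_succ_apply', ih x y hx hy]
      exact hνmul _ _ (hνiterC k x hx) (hνiterC k y hy)
  have hνσ : ∀ x : V, ν (v⁻¹ * x * v) = v⁻¹ * ν x * v := by
    intro x; rw [hν]; group
  have hνiterσ : ∀ (k : ℕ) (x : V), ν^[k] (v⁻¹ * x * v) = v⁻¹ * ν^[k] x * v := by
    intro k
    induction k with
    | zero => intro x; simp
    | succ k ih =>
      intro x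
      rw [Function.iterate_succ_apply', Function.iterate_succ_apply', ih, hνσ]
  -- ν iterates vanish eventually, by nilpotency
  have hνlcs : ∀ (k : ℕ) (x : V), ν^[k] x ∈ (⊤ : Subgroup V).lowerCentralSeries k := by
    intro k
    induction k with
    | zero => intro x; trivial
    | succ k ih =>
      intro x
      rw [Function.iterate_succ_apply']
      set y := ν^[k] x with hy
      have hyL : y ∈ (⊤ : Subgroup V).lowerCentralSeries k := ih x
      have hcommut : ν y = ⁅y⁻¹, v⁻¹⁆ := by
        rw [hν, commutatorElement_def]; group
      rw [hcommut]
      show ⁅y⁻¹, v⁻¹⁆ ∈ ⁅(⊤ : Subgroup V).lowerCentralSeries k, (⊤ : Subgroup V)⁆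
      exact Subgroup.commutator_mem_commutator (inv_mem hyL) (Subgroup.mem_top _)
  obtain ⟨d, hd⟩ := nilpotent_iff_lowerCentralSeries.mp ‹Group.IsNilpotent V›
  have hνd : ν^[d] c = 1 := by
    have := hνlcs d c
    rw [hd] at this
    simpa using this
  -- the telescoping product P
  set P : ℕ → V := fun k => Nat.rec 1 (fun _ pk => (v⁻¹ * pk * v) * c) k with hP
  have hP0 : P 0 = 1 := rfl
  have hPsucc : ∀ k, P (k + 1) = (v⁻¹ * P k * v) * c := fun _ => rfl
  have hPC : ∀ k, P k ∈ C := by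
    intro k
    induction k with
    | zero => rw [hP0]; exact one_mem C
    | succ k ih => rw [hPsucc]; exact mul_mem (hσC _ ih) hc
  have hPpow : ∀ k, (v * c) ^ k = v ^ k * P k := by
    intro k
    induction k with
    | zero => simp [hP0]
    | succ k ih =>
      rw [pow_succ, ih, hPsucc, pow_succ]
      group
  have hPn : P n = 1 := by
    have hvnU : v ^ n ∈ U := by rw [hn]; exact Subgroup.pow_index_mem U v
    have h1 : (α v) ^ n = v ^ n := by
      rw [← map_pow]
      exact hα _ hvnU
    have h2 : v ^ n * P n = v ^ n * 1 := by
      rw [mul_one, ← hPpow, hvc, h1]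
    exact mul_left_cancel h2
  -- downward induction: ν^[k+1] c = 1 → ν^[k] c = 1
  have hstep : ∀ k : ℕ, ν^[k + 1] c = 1 → ν^[k] c = 1 := by
    intro k hk1
    set e : V := ν^[k] c with he
    have hνe : ν e = 1 := by
      rw [Function.iterate_succ_apply'] at hk1
      exact hk1
    have hconj : v⁻¹ * e * v = e := by
      have : e⁻¹ * (v⁻¹ * e * v) = 1 := hνe
      calc v⁻¹ * e * v = e * (e⁻¹ * (v⁻¹ * e * v)) := by group
        _ = e := by rw [this, mul_one]
    have hPe : ∀ m, ν^[k] (P m) = e ^ m := by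
      intro m
      induction m with
      | zero =>
        rw [hP0, pow_zero]
        exact Function.iterate_fixed hν1 k
      | succ m ih =>
        rw [hPsucc, hνitermul k _ _ (hσC _ (hPC m)) hc, hνiterσ, ih,
          conj_pow_aux, hconj, ← he, pow_succ]
    have hen : e ^ n = 1 := by
      rw [← hPe n, hPn]
      exact Function.iterate_fixed hν1 k
    exact htf e n hn0 hen
  have hdown : ∀ j : ℕ, ν^[d - j] c = 1 := by
    intro j
    induction j with
    | zero => simpa using hνd
    | succ j ih =>
      by_cases hj : d ≤ j
      · have : d - (j + 1) = d - j := by omega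
        rw [this]; exact ih
      · have : d - j = (d - (j + 1)) + 1 := by omega
        rw [this] at ih
        exact hstep _ ih
  have hc1 : c = 1 := by simpa using hdown d
  have : v⁻¹ * α v = 1 := by rw [← hcdef, hc1]
  calc α v = v * (v⁻¹ * α v) := by group
    _ = v := by rw [this, mul_one]

/-- If `V` is torsion-free nilpotent, `U` a normal subgroup of finite index and `α` an
automorphism of `V` centralizing `U`, then `α` is the identity. -/
theorem stmt_14 {V : Type*} [Group V] [Group.IsNilpotent V]
    (hTF : ∀ g : V, g ≠ 1 → ¬IsOfFinOrder g)
    (U : Subgroup V) [U.Normal] [U.FiniteIndex]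
    (α : MulAut V) (hα : ∀ u ∈ U, α u = u) :
    α = 1 := by
  ext v
  exact stmt_14_aux hTF U α hα v
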